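/- Let a > 0 be a real number, let k ≥ 1 be an integer and let ε be a real number with 0 < ε < 4^{−(k−1)}. Let P' be a finite point of E'_a(ℝ) with x(P') = (1+ε)·√a, and suppose 2^kP' is a finite point. Then log z(2^kP') > −128·4^{2(k−1)}·ε². -/

import Mathlib

open Filter Real

/-- The translated elliptic curve `E'_a : y² = x³ − 3√a·x² + 4a·x − 2a^{3/2}` over `ℝ`,
obtained from `E_a : y² = x³ + a·x` via `x ↦ x + √a`. -/
noncomputable def E'curve (a : ℝ) : WeierstrassCurve.Affine ℝ :=
  { a₁ := 0, a₂ := -3 * Real.sqrt a, a₃ := 0, a₄ := 4 * a, a₆ := -2 * a ^ ((3 : ℝ) / 2) }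

/-- The x-coordinate of a point (with junk value `0` at the identity `O`). -/
def xc {F : Type*} [Field F] {W : WeierstrassCurve.Affine F} : W.Point → F
  | .zero => 0
  | @WeierstrassCurve.Affine.Point.some _ _ _ x _ _ => x

/-- For a finite point `Q` of `E'_a` with `x(Q) = x`, the quantity
`z(Q) = 1 − 8a·x⁻² + 16·a^{3/2}·x⁻³ − 8a²·x⁻⁴` from Tate's series. -/
noncomputable def zE' (a x : ℝ) : ℝ :=
  1 - 8 * a / x ^ 2 + 16 * a ^ ((3 : ℝ) / 2) / x ^ 3 - 8 * a ^ 2 / x ^ 4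

open WeierstrassCurve.Affine

lemma E'a1 (a : ℝ) : (E'curve a).a₁ = 0 := rfl
lemma E'a2 (a : ℝ) : (E'curve a).a₂ = -3 * Real.sqrt a := rfl
lemma E'a3 (a : ℝ) : (E'curve a).a₃ = 0 := rfl
lemma E'a4 (a : ℝ) : (E'curve a).a₄ = 4 * a := rfl

lemma rpow32 {a : ℝ} (ha : 0 < a) : a ^ ((3 : ℝ) / 2) = (Real.sqrt a) ^ 3 := by
  rw [Real.sqrt_eq_rpow, ← Real.rpow_natCast (a ^ ((1:ℝ)/2)) 3, ← Real.rpow_mul ha.le]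
  norm_num

lemma E'_equation_iff {a x y : ℝ} (ha : 0 < a) :
    (E'curve a).Equation x y ↔
      y ^ 2 = x ^ 3 - 3 * Real.sqrt a * x ^ 2 + 4 * (Real.sqrt a) ^ 2 * x
        - 2 * (Real.sqrt a) ^ 3 := by
  rw [WeierstrassCurve.Affine.equation_iff]
  have h2 : Real.sqrt a ^ 2 = a := Real.sq_sqrt ha.le
  simp only [E'curve, rpow32 ha]
  constructor <;> intro h
  · linear_combination h - 4 * x * h2
  · linear_combination h + 4 * x * h2

lemma E'_x_ge {a x y : ℝ} (ha : 0 < a) (h : (E'curve a).Equation x y) :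
    Real.sqrt a ≤ x := by
  rw [E'_equation_iff ha] at h
  have hs : 0 < Real.sqrt a := Real.sqrt_pos.mpr ha
  by_contra hlt
  push_neg at hlt
  have h1 : 0 < ((x - Real.sqrt a) ^ 2 + (Real.sqrt a) ^ 2) := by positivity
  nlinarith [mul_pos (sub_pos.mpr hlt) h1, sq_nonneg y]

lemma double_x {a : ℝ} (ha : 0 < a) {x y u : ℝ}
    (h : (E'curve a).Nonsingular x y) (hu : 0 < u)
    (hx : x = (1 + u) * Real.sqrt a) :
    ∃ (X Y : ℝ) (h' : (E'curve a).Nonsingular X Y),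
      (Point.some _ _ h + Point.some _ _ h : (E'curve a).Point) = Point.some _ _ h' ∧
      X * (4 * u * (u ^ 2 + 1)) =
        Real.sqrt a * (u ^ 4 + 4 * u ^ 3 - 2 * u ^ 2 + 4 * u + 1) := by
  have hs : 0 < Real.sqrt a := Real.sqrt_pos.mpr ha
  have ha2 : a = Real.sqrt a ^ 2 := (Real.sq_sqrt ha.le).symm
  have heq := h.1
  rw [E'_equation_iff ha] at heq
  have hy2 : y ^ 2 = Real.sqrt a ^ 3 * (u ^ 3 + u) := by
    rw [hx] at heq; linear_combination heq
  have hy0 : y ≠ 0 := by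
    intro h0
    rw [h0] at hy2
    nlinarith [pow_pos hs 3, mul_pos hu (mul_pos hu hu)]
  have hyne : y ≠ (E'curve a).negY x y := by
    simp only [WeierstrassCurve.Affine.negY, E'a1, E'a3]
    intro hcon; apply hy0; linarith
  refine ⟨_, _, _, Point.add_self_of_Y_ne hyne, ?_⟩
  rw [slope_of_Y_ne rfl hyne]
  simp only [WeierstrassCurve.Affine.addX, WeierstrassCurve.Affine.negY, E'a1, E'a2, E'a3, E'a4,
    zero_mul, mul_zero, sub_zero, zero_add, add_zero]
  have h2y : y - -y = 2 * y := by ring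
  rw [h2y]
  subst hx
  rw [ha2]
  set s := Real.sqrt a with hs_def
  field_simp
  rw [Real.sqrt_sq hs.le]
  linear_combination (16 * s * u * (u ^ 2 + 1) * (1 - 2 * u)
    - 4 * s * (u ^ 4 + 4 * u ^ 3 - 2 * u ^ 2 + 4 * u + 1)) * hy2

lemma z_eq {a X : ℝ} (ha : 0 < a) (hX : Real.sqrt a ≤ X) :
    zE' a X = 1 - 8 * (Real.sqrt a * (X - Real.sqrt a) / X ^ 2) ^ 2 := by
  have hs : 0 < Real.sqrt a := Real.sqrt_pos.mpr ha
  have hX0 : 0 < X := lt_of_lt_of_le hs hX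
  have ha2 : Real.sqrt a ^ 2 = a := Real.sq_sqrt ha.le
  rw [zE', rpow32 ha]
  field_simp
  linear_combination (8 * X ^ 2 + 8 * (Real.sqrt a ^ 2 + a)) * ha2

set_option maxHeartbeats 1000000 in
/-- Lemma 3.3(d): for `a > 0`, an integer `k ≥ 1` and a real `ε` with `0 < ε < 4^{−(k−1)}`,
if `P'` is a finite point of `E'_a(ℝ)` with `x(P') = (1+ε)·√a` and `2^kP'` is a finite
point, then `log z(2^kP') > −128·4^{2(k−1)}·ε²`. -/
theorem logz_2kP_lower_bound_eps (a : ℝ) (ha : 0 < a) (k : ℕ) (hk : 1 ≤ k)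
    (ε : ℝ) (hε0 : 0 < ε) (hε1 : ε < ((4 : ℝ) ^ (k - 1))⁻¹)
    (P' : (E'curve a).Point) (hP' : P' ≠ 0)
    (hx : xc P' = (1 + ε) * Real.sqrt a)
    (h2k : (2 ^ k) • P' ≠ 0) :
    Real.log (zE' a (xc ((2 ^ k) • P'))) > -(128 * (4 : ℝ) ^ (2 * (k - 1)) * ε ^ 2) := by
  have hs : 0 < Real.sqrt a := Real.sqrt_pos.mpr ha
  set s := Real.sqrt a with hs_def
  set m : ℝ := 4 ^ k * ε with hm_def
  have hm0 : 0 < m := by positivity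
  have hRHS : 128 * (4 : ℝ) ^ (2 * (k - 1)) * ε ^ 2 = 8 * m ^ 2 := by
    have hpow : (4 : ℝ) ^ k = 4 ^ (k - 1) * 4 := by
      conv_lhs => rw [show k = (k - 1) + 1 by omega]
      rw [pow_succ]
    have hpow2 : (4 : ℝ) ^ (2 * (k - 1)) = ((4 : ℝ) ^ (k - 1)) ^ 2 := by
      rw [mul_comm, pow_mul]
    rw [hm_def, hpow2, hpow]
    ring
  rw [hRHS]
  rcases lt_or_ge (Real.log 2) (8 * m ^ 2) with hcase | hcase
  · -- trivial case: the bound is weaker than the universal bound z ≥ 1/2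
    rcases hQe : (2 ^ k) • P' with _ | @⟨X, Y, hXY⟩
    · exact absurd hQe h2k
    · have hxc : xc (Point.some _ _ hXY) = X := rfl
      rw [hxc]
      have hXs : s ≤ X := E'_x_ge ha hXY.1
      have hX0 : 0 < X := lt_of_lt_of_le hs hXs
      have hz := z_eq ha hXs
      set w : ℝ := s * (X - s) / X ^ 2 with hw_def
      have hw0 : 0 ≤ w :=
        div_nonneg (mul_nonneg hs.le (sub_nonneg.mpr hXs)) (by positivity)
      have hw14 : w ≤ 1 / 4 := by
        rw [hw_def, div_le_iff₀ (by positivity)]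
        nlinarith [sq_nonneg (X - 2 * s)]
      have hz12 : (1 : ℝ) / 2 ≤ zE' a X := by rw [hz]; nlinarith
      have hlog : Real.log (1 / 2) ≤ Real.log (zE' a X) :=
        Real.log_le_log (by norm_num) hz12
      rw [show (1 : ℝ) / 2 = 2⁻¹ by norm_num, Real.log_inv] at hlog
      linarith
  · -- main case
    have hm3 : m ≤ 0.295 := by
      nlinarith [Real.log_two_lt_d9, hm0, sq_nonneg (m - 0.295)]
    have h4k : (4 : ℝ) ≤ 4 ^ k := by
      calc (4 : ℝ) = 4 ^ 1 := by norm_num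
      _ ≤ 4 ^ k := pow_le_pow_right₀ (by norm_num) hk
    have hε4 : 4 * ε ≤ m := by
      rw [hm_def]
      nlinarith [mul_nonneg (sub_nonneg.mpr h4k) hε0.le]
    have hε074 : ε ≤ 0.074 := by linarith
    rcases P' with _ | @⟨x0, y0, h0⟩
    · exact absurd rfl hP'
    have hx0 : x0 = (1 + ε) * s := hx
    have key : ∀ j : ℕ, 1 ≤ j → j ≤ k →
        ∃ X Y, ∃ h' : (E'curve a).Nonsingular X Y,
          (2 ^ j) • (Point.some _ _ h0 : (E'curve a).Point) = Point.some _ _ h' ∧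
          s * (1 + 0.7 * ((4 : ℝ) ^ j * ε)) ≤ X * ((4 : ℝ) ^ j * ε) := by
      intro j hj1
      induction j, hj1 using Nat.le_induction with
      | base =>
        intro h1k
        obtain ⟨X, Y, h', hadd, hXeq⟩ := double_x ha h0 hε0 hx0
        rw [← hs_def] at hXeq
        refine ⟨X, Y, h', ?_, ?_⟩
        · rw [pow_one, two_nsmul, hadd]
        · rw [show ((4 : ℝ) ^ 1 * ε) = 4 * ε by norm_num]
          nlinarith [hXeq, mul_pos hs hε0, hε074, hε0.le, hs.le, sq_nonneg ε,
            mul_nonneg (mul_nonneg hs.le hε0.le) (sq_nonneg ε)]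
      | succ j hj ih =>
        intro hjk
        obtain ⟨X, Y, h', heq, hb⟩ := ih (by omega)
        set B : ℝ := (4 : ℝ) ^ j * ε with hB_def
        have hB : 0 < B := by positivity
        have hB4m : 4 * B ≤ m := by
          rw [hB_def, hm_def]
          have h1 : (4 : ℝ) ^ (j + 1) ≤ 4 ^ k := pow_le_pow_right₀ (by norm_num) hjk
          have h2 : (4 : ℝ) ^ (j + 1) = 4 * 4 ^ j := by rw [pow_succ]; ring
          nlinarith [mul_nonneg (sub_nonneg.mpr h1) hε0.le, h2]
        have hBle : B ≤ 0.074 := by linarith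
        have hXgt : 14 * s ≤ X := by nlinarith [hb, mul_pos hs hB, hs]
        set u : ℝ := X / s - 1 with hu_def
        have hu13 : 13 ≤ u := by
          rw [hu_def, le_sub_iff_add_le, le_div_iff₀ hs]
          linarith
        have hu : 0 < u := by linarith
        have hxu : X = (1 + u) * s := by
          rw [hu_def]
          field_simp
          ring
        have hub : 1 - 0.3 * B ≤ u * B := by
          rw [hxu] at hb
          nlinarith [hb, hs]
        obtain ⟨X', Y', h'', hadd, hXeq⟩ := double_x ha h' hu hxu
        rw [← hs_def] at hXeq
        refine ⟨X', Y', h'', ?_, ?_⟩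
        · rw [pow_succ', mul_smul, heq, two_nsmul, hadd]
        · rw [show ((4 : ℝ) ^ (j + 1) * ε) = 4 * B by rw [hB_def]; ring]
          have hpoly : (1 + 2.8 * B) * (u * (u ^ 2 + 1)) ≤
              B * (u ^ 4 + 4 * u ^ 3 - 2 * u ^ 2 + 4 * u + 1) := by
            nlinarith [mul_nonneg (sub_nonneg.mpr hub) (sq_nonneg (u ^ 2 - 1)),
              hu13, hB.le, hBle, hub, sq_nonneg u, mul_pos hu hu,
              mul_nonneg (sub_nonneg.mpr hu13) (sub_nonneg.mpr hub)]
          have huu : 0 < u * (u ^ 2 + 1) := by positivity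
          have hfin : s * (1 + 2.8 * B) * (u * (u ^ 2 + 1)) ≤
              X' * (4 * B) * (u * (u ^ 2 + 1)) := by
            calc s * (1 + 2.8 * B) * (u * (u ^ 2 + 1))
                = s * ((1 + 2.8 * B) * (u * (u ^ 2 + 1))) := by ring
              _ ≤ s * (B * (u ^ 4 + 4 * u ^ 3 - 2 * u ^ 2 + 4 * u + 1)) :=
                  mul_le_mul_of_nonneg_left hpoly hs.le
              _ = (s * (u ^ 4 + 4 * u ^ 3 - 2 * u ^ 2 + 4 * u + 1)) * B := by ring
              _ = X' * (4 * u * (u ^ 2 + 1)) * B := by rw [hXeq]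
              _ = X' * (4 * B) * (u * (u ^ 2 + 1)) := by ring
          have h2 := (mul_le_mul_iff_of_pos_right huu).mp hfin
          linarith [h2]
    obtain ⟨X, Y, hXY, hQe, hb⟩ := key k hk le_rfl
    rw [hQe]
    have hxc : xc (Point.some _ _ hXY) = X := rfl
    rw [hxc]
    have hbm : s * (1 + 0.7 * m) ≤ X * m := by
      rw [hm_def]; exact hb
    have hXs : s ≤ X := E'_x_ge ha hXY.1
    have hX0 : 0 < X := lt_of_lt_of_le hs hXs
    have hz := z_eq ha hXs
    set w : ℝ := s * (X - s) / X ^ 2 with hw_def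
    have hw0 : 0 ≤ w :=
      div_nonneg (mul_nonneg hs.le (sub_nonneg.mpr hXs)) (by positivity)
    have hD : 0 ≤ X * m - s * (1 + 0.7 * m) := sub_nonneg.mpr hbm
    have hwX : s * (X - s) * (1 + 1.7 * m) ≤ m * X ^ 2 := by
      nlinarith [sq_nonneg (X * m - s * (1 + 0.7 * m)), hbm, hm0, hm3, hs,
        mul_nonneg (mul_nonneg hs.le hD) (show (0:ℝ) ≤ 1 - 0.3 * m by linarith),
        mul_nonneg hs.le hD, sq_nonneg (s * m)]
    have hw1 : w * (1 + 1.7 * m) ≤ m := by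
      rw [hw_def, div_mul_eq_mul_div, div_le_iff₀ (by positivity)]
      nlinarith [hwX]
    have hwm : w ≤ m := by nlinarith [hw1, hw0, hm0]
    have hzpos : 0 < 1 - 8 * w ^ 2 := by nlinarith [hwm, hw0, hm3, hm0]
    have hkey : 1 < (1 + 8 * m ^ 2) * (1 - 8 * w ^ 2) := by
      have hwp : 0 ≤ w * (1 + 1.7 * m) := mul_nonneg hw0 (by linarith)
      have h2 : w ^ 2 * (1 + 1.7 * m) ^ 2 ≤ m ^ 2 := by
        nlinarith [mul_self_le_mul_self hwp hw1]
      nlinarith [h2, hm0, hm3, sq_nonneg w, mul_nonneg (sq_nonneg w) hm0.le,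
        mul_pos hm0 hm0]
    have hloginv := Real.log_le_sub_one_of_pos (inv_pos.mpr hzpos)
    rw [Real.log_inv] at hloginv
    have hinv : (1 - 8 * w ^ 2)⁻¹ < 1 + 8 * m ^ 2 := by
      rw [← one_div, div_lt_iff₀ hzpos]
      linarith [hkey]
    rw [hz]
    linarith [hloginv, hinv]
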